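/- Suppose K : [0,∞) → (0,∞) is differentiable with K'(t) ≤ −δK(t) for δ > 0, and let x : ℝ → ℝ be continuous with ∫_{-∞}^0 |x(s)|^{p} K(−s) ds < ∞ for some p > 0. Define F(t) = ∫_{-∞}^0 |x(t+s)|^{p} K(−s) ds. Then, wherever F is differentiable, F'(t) ≤ |x(t)|^{p} K(0) − δ F(t). -/

import Mathlib

open MeasureTheory Filter Topology

/-- Kernel decay: from `K' ≤ -δ K` on `[0,∞)` we get `K (a + h) ≤ exp (-δ h) * K a`. -/
private lemma kernel_decay {K : ℝ → ℝ} {δ : ℝ}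
    (hKdiff : Differentiable ℝ K)
    (hKderiv : ∀ t, 0 ≤ t → deriv K t ≤ -δ * K t)
    {a h : ℝ} (ha : 0 ≤ a) (hh : 0 ≤ h) :
    K (a + h) ≤ Real.exp (-δ * h) * K a := by
  set φ : ℝ → ℝ := fun s => Real.exp (δ * s) * K s with hφdef
  have hder : ∀ s : ℝ, HasDerivAt φ
      (Real.exp (δ * s) * δ * K s + Real.exp (δ * s) * deriv K s) s := by
    intro s
    have h1 : HasDerivAt (fun s : ℝ => Real.exp (δ * s)) (Real.exp (δ * s) * δ) s := by
      have hin : HasDerivAt (fun s : ℝ => δ * s) δ s := by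
        simpa using (hasDerivAt_id s).const_mul δ
      exact (Real.hasDerivAt_exp (δ * s)).comp s hin
    exact h1.mul (hKdiff s).hasDerivAt
  have hanti : AntitoneOn φ (Set.Ici 0) := by
    apply antitoneOn_of_deriv_nonpos (convex_Ici 0)
    · exact ((Real.continuous_exp.comp (continuous_const.mul continuous_id)).mul
        hKdiff.continuous).continuousOn
    · intro s _
      exact ((hder s).differentiableAt).differentiableWithinAt
    · intro s hs
      rw [interior_Ici] at hs
      have hs0 : (0:ℝ) ≤ s := le_of_lt hs
      rw [(hder s).deriv]
      have hd := hKderiv s hs0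
      have he := (Real.exp_pos (δ * s)).le
      nlinarith [Real.exp_pos (δ * s), hKderiv s hs0]
  have hmem1 : a ∈ Set.Ici (0:ℝ) := ha
  have hmem2 : a + h ∈ Set.Ici (0:ℝ) := by simp; linarith
  have hkey : φ (a + h) ≤ φ a := hanti hmem1 hmem2 (by linarith)
  have hexp : (0:ℝ) < Real.exp (δ * (a + h)) := Real.exp_pos _
  have : Real.exp (δ * (a + h)) * K (a + h) ≤ Real.exp (δ * a) * K a := hkey
  rw [show -δ * h = δ * a - δ * (a + h) by ring, Real.exp_sub, div_mul_eq_mul_div,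
    le_div_iff₀ hexp]
  linear_combination this

/-- Forward propagation of integrability of the memory integrand. -/
private lemma int_forward {K x : ℝ → ℝ} {δ p : ℝ} (hp : 0 < p)
    (hKdiff : Differentiable ℝ K)
    (hKpos : ∀ t, 0 ≤ t → 0 < K t)
    (hKderiv : ∀ t, 0 ≤ t → deriv K t ≤ -δ * K t)
    (hx : Continuous x)
    {t : ℝ} (ht : IntegrableOn (fun u => |x u| ^ p * K (t - u)) (Set.Iic t))
    {h : ℝ} (hh : 0 ≤ h) :
    IntegrableOn (fun u => |x u| ^ p * K (t + h - u)) (Set.Iic (t + h)) := by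
  have hfabs : Continuous fun u => |x u| ^ p :=
    hx.abs.rpow_const (fun u => Or.inr hp.le)
  have hcont : Continuous fun u => |x u| ^ p * K (t + h - u) :=
    hfabs.mul (hKdiff.continuous.comp (continuous_const.sub continuous_id))
  rw [← Set.Iic_union_Ioc_eq_Iic (le_add_of_nonneg_right hh)]
  apply IntegrableOn.union
  · apply Integrable.mono (ht.const_mul (Real.exp (-δ * h)))
      hcont.aestronglyMeasurable.restrict
    filter_upwards [self_mem_ae_restrict measurableSet_Iic] with u hu
    have hu' : u ≤ t := hu
    have h1 : K (t + h - u) ≤ Real.exp (-δ * h) * K (t - u) := by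
      have := kernel_decay hKdiff hKderiv (sub_nonneg.mpr hu') hh
      simpa [show t - u + h = t + h - u by ring] using this
    have hK1 : 0 < K (t - u) := hKpos _ (sub_nonneg.mpr hu')
    have hK2 : 0 < K (t + h - u) := hKpos _ (by linarith)
    have hf0 : 0 ≤ |x u| ^ p := Real.rpow_nonneg (abs_nonneg _) p
    have hexp : 0 < Real.exp (-δ * h) := Real.exp_pos _
    rw [Real.norm_eq_abs, Real.norm_eq_abs,
      abs_of_nonneg (mul_nonneg hf0 hK2.le),
      abs_of_nonneg (mul_nonneg hexp.le (mul_nonneg hf0 hK1.le))]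
    nlinarith [mul_le_mul_of_nonneg_left h1 hf0]
  · exact (hcont.integrableOn_Icc (a := t) (b := t + h)).mono_set Set.Ioc_subset_Icc_self

theorem memory_norm_differential_inequality (K x : ℝ → ℝ) (δ p : ℝ)
    (hδ : 0 < δ) (hp : 0 < p)
    (hKdiff : Differentiable ℝ K)
    (hKpos : ∀ t, 0 ≤ t → 0 < K t)
    (hKderiv : ∀ t, 0 ≤ t → deriv K t ≤ -δ * K t)
    (hx : Continuous x)
    (hint : IntegrableOn (fun s => |x s| ^ p * K (-s)) (Set.Iic 0)) :
    ∀ t : ℝ,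
      DifferentiableAt ℝ (fun t => ∫ s in Set.Iic (0 : ℝ), |x (t + s)| ^ p * K (-s)) t →
      deriv (fun t => ∫ s in Set.Iic (0 : ℝ), |x (t + s)| ^ p * K (-s)) t ≤
        |x t| ^ p * K 0 - δ * ∫ s in Set.Iic (0 : ℝ), |x (t + s)| ^ p * K (-s) := by
  intro t hFdiff
  have hfabs : Continuous fun u => |x u| ^ p :=
    hx.abs.rpow_const (fun u => Or.inr hp.le)
  have hf0 : ∀ u, (0:ℝ) ≤ |x u| ^ p := fun u => Real.rpow_nonneg (abs_nonneg _) p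
  set G : ℝ → ℝ := fun τ => ∫ u in Set.Iic τ, |x u| ^ p * K (τ - u) with hGdef
  -- the shift identity: the original function equals G
  have Feq : ∀ τ : ℝ, (∫ s in Set.Iic (0 : ℝ), |x (τ + s)| ^ p * K (-s)) = G τ := by
    intro τ
    show _ = ∫ u in Set.Iic τ, |x u| ^ p * K (τ - u)
    rw [← integral_indicator (measurableSet_Iic (a := τ)),
      ← integral_indicator (measurableSet_Iic (a := (0:ℝ)))]
    rw [← integral_add_right_eq_self
      (fun u => (Set.Iic τ).indicator (fun u => |x u| ^ p * K (τ - u)) u) τ]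
    congr 1
    funext s
    by_cases hs : s ≤ 0
    · rw [Set.indicator_of_mem (by simpa using hs : s + τ ∈ Set.Iic τ),
        Set.indicator_of_mem (by simpa using hs : s ∈ Set.Iic (0:ℝ))]
      rw [show τ - (s + τ) = -s by ring, show s + τ = τ + s by ring]
    · rw [Set.indicator_of_notMem (by simpa using hs),
        Set.indicator_of_notMem (by simpa using hs)]
  have FeqFun : (fun τ : ℝ => ∫ s in Set.Iic (0 : ℝ), |x (τ + s)| ^ p * K (-s)) = G :=
    funext Feq
  rw [FeqFun] at hFdiff
  rw [FeqFun, Feq t]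
  have hd : HasDerivAt G (deriv G t) t := hFdiff.hasDerivAt
  have hslope : Tendsto (slope G t) (𝓝[≠] t) (𝓝 (deriv G t)) :=
    hasDerivAt_iff_tendsto_slope.mp hd
  by_cases hInt : IntegrableOn (fun u => |x u| ^ p * K (t - u)) (Set.Iic t)
  · -- main case: integrable at t
    -- key one-sided estimate
    have key : ∀ v : ℝ, t < v →
        G v ≤ Real.exp (-δ * (v - t)) * G t + ∫ u in Set.Ioc t v, |x u| ^ p * K 0 := by
      intro v hv
      have hvt : (0:ℝ) ≤ v - t := by linarith
      have hi2 := int_forward hp hKdiff hKpos hKderiv hx hInt hvt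
      rw [show t + (v - t) = v by ring] at hi2
      have hi2a : IntegrableOn (fun u => |x u| ^ p * K (v - u)) (Set.Iic t) :=
        hi2.mono_set (Set.Iic_subset_Iic.mpr (by linarith))
      have hi2b : IntegrableOn (fun u => |x u| ^ p * K (v - u)) (Set.Ioc t v) :=
        hi2.mono_set Set.Ioc_subset_Iic_self
      have hsplit : G v = (∫ u in Set.Iic t, |x u| ^ p * K (v - u))
          + ∫ u in Set.Ioc t v, |x u| ^ p * K (v - u) := by
        show (∫ u in Set.Iic v, |x u| ^ p * K (v - u)) = _
        rw [← Set.Iic_union_Ioc_eq_Iic (le_of_lt hv),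
          setIntegral_union (Set.Iic_disjoint_Ioc le_rfl) measurableSet_Ioc hi2a hi2b]
      have hb1 : (∫ u in Set.Iic t, |x u| ^ p * K (v - u))
          ≤ Real.exp (-δ * (v - t)) * G t := by
        have hmono : (∫ u in Set.Iic t, |x u| ^ p * K (v - u))
            ≤ ∫ u in Set.Iic t, Real.exp (-δ * (v - t)) * (|x u| ^ p * K (t - u)) := by
          apply setIntegral_mono_on hi2a (hInt.const_mul _) measurableSet_Iic
          intro u hu
          have hu' : u ≤ t := hu
          have h1 : K (v - u) ≤ Real.exp (-δ * (v - t)) * K (t - u) := by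
            have := kernel_decay hKdiff hKderiv (sub_nonneg.mpr hu') hvt
            simpa [show t - u + (v - t) = v - u by ring] using this
          nlinarith [hf0 u, mul_le_mul_of_nonneg_left h1 (hf0 u)]
        rwa [integral_const_mul] at hmono
      have hb2 : (∫ u in Set.Ioc t v, |x u| ^ p * K (v - u))
          ≤ ∫ u in Set.Ioc t v, |x u| ^ p * K 0 := by
        apply setIntegral_mono_on hi2b
          (((hfabs.mul continuous_const).integrableOn_Icc (a := t) (b := v)).mono_set
            Set.Ioc_subset_Icc_self) measurableSet_Ioc
        intro u hu
        have h0vu : (0:ℝ) ≤ v - u := by linarith [hu.2]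
        have h1 : K (v - u) ≤ K 0 := by
          have := kernel_decay hKdiff hKderiv (le_refl (0:ℝ)) h0vu
          have h2 : Real.exp (-δ * (v - u)) ≤ 1 := by
            apply Real.exp_le_one_iff.mpr; nlinarith
          have hK0 : 0 < K 0 := hKpos 0 le_rfl
          simpa using this.trans (by nlinarith)
        show |x u| ^ p * K (v - u) ≤ |x u| ^ p * K 0
        nlinarith [hf0 u, mul_le_mul_of_nonneg_left h1 (hf0 u)]
      linarith
    -- pass to limit from the right
    have hslopeR : Tendsto (slope G t) (𝓝[>] t) (𝓝 (deriv G t)) :=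
      hslope.mono_left (nhdsWithin_mono t (fun v hv => ne_of_gt hv))
    set E : ℝ → ℝ := fun v => Real.exp (-δ * (v - t)) with hEdef
    have hE : HasDerivAt E (-δ) t := by
      have hin : HasDerivAt (fun v : ℝ => -δ * (v - t)) (-δ) t := by
        simpa using ((hasDerivAt_id t).sub_const t).const_mul (-δ)
      have := (Real.hasDerivAt_exp (-δ * (t - t))).comp t hin
      simpa [hEdef, Function.comp_def] using this
    have hEslope : Tendsto (slope E t) (𝓝[>] t) (𝓝 (-δ)) :=
      (hasDerivAt_iff_tendsto_slope.mp hE).mono_left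
        (nhdsWithin_mono t (fun v hv => ne_of_gt hv))
    set G2 : ℝ → ℝ := fun v => ∫ u in t..v, |x u| ^ p * K 0 with hG2def
    have hG2 : HasDerivAt G2 (|x t| ^ p * K 0) t := by
      apply intervalIntegral.integral_hasDerivAt_right
        ((hfabs.mul continuous_const).intervalIntegrable t t)
        ((hfabs.mul continuous_const).stronglyMeasurableAtFilter _ _)
        (hfabs.mul continuous_const).continuousAt
    have hG2slope : Tendsto (slope G2 t) (𝓝[>] t) (𝓝 (|x t| ^ p * K 0)) :=
      (hasDerivAt_iff_tendsto_slope.mp hG2).mono_left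
        (nhdsWithin_mono t (fun v hv => ne_of_gt hv))
    have hRtend : Tendsto (fun v => slope E t v * G t + slope G2 t v) (𝓝[>] t)
        (𝓝 ((-δ) * G t + |x t| ^ p * K 0)) :=
      (hEslope.mul_const _).add hG2slope
    have hle : ∀ᶠ v in 𝓝[>] t, slope G t v ≤ slope E t v * G t + slope G2 t v := by
      filter_upwards [self_mem_nhdsWithin] with v hv
      have hv' : t < v := hv
      have hvt : (0:ℝ) < v - t := by linarith
      have hkey := key v hv'
      have hint_eq : G2 v = ∫ u in Set.Ioc t v, |x u| ^ p * K 0 := by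
        show (∫ u in t..v, |x u| ^ p * K 0) = _
        exact intervalIntegral.integral_of_le (le_of_lt hv')
      rw [slope_def_field, slope_def_field, slope_def_field]
      have hG2t : G2 t = 0 := intervalIntegral.integral_same
      rw [hG2t]
      simp only [hEdef, sub_zero]
      rw [show (Real.exp (-δ * (t - t)) : ℝ) = 1 by simp]
      rw [div_mul_eq_mul_div, ← add_div, div_le_div_iff_of_pos_right hvt]
      rw [hint_eq]
      linarith
    have hfinal : deriv G t ≤ (-δ) * G t + |x t| ^ p * K 0 :=
      le_of_tendsto_of_tendsto hslopeR hRtend hle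
    linarith
  · -- degenerate case: not integrable at t, then G vanishes on (-∞, t]
    have hzero : ∀ v : ℝ, v ≤ t → G v = 0 := by
      intro v hv
      apply integral_undef
      intro hcontra
      apply hInt
      have := int_forward hp hKdiff hKpos hKderiv hx hcontra (sub_nonneg.mpr hv)
      simpa [show v + (t - v) = t by ring] using this
    have hslopeL : Tendsto (slope G t) (𝓝[<] t) (𝓝 (deriv G t)) :=
      hslope.mono_left (nhdsWithin_mono t (fun v hv => ne_of_lt hv))
    have hzeroSlope : ∀ᶠ v in 𝓝[<] t, slope G t v = 0 := by
      filter_upwards [self_mem_nhdsWithin] with v hv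
      have hv' : v < t := hv
      rw [slope_def_field, hzero v hv'.le, hzero t le_rfl]
      simp
    have h0 : Tendsto (slope G t) (𝓝[<] t) (𝓝 (0:ℝ)) := by
      refine Tendsto.congr' ?_ tendsto_const_nhds
      filter_upwards [hzeroSlope] with v hv using hv.symm
    have hderiv0 : deriv G t = 0 := tendsto_nhds_unique hslopeL h0
    rw [hderiv0, hzero t le_rfl]
    have hK0 : 0 < K 0 := hKpos 0 le_rfl
    nlinarith [hf0 t]
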